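/- arXiv:1512.02174 — 2 statements merged into one kernel-verified Lean document; each statement's English description precedes it below -/
import Mathlib

section
/- In the missing data model, let L be a closed subspace of L_2(g·dν) and let Π: Z×Z → ℝ be a symmetric measurable kernel representing the orthogonal projection onto L in L_2(g·dν), i.e. Π(z_1,·) ∈ L for every z_1 and ∫ Π(z_1,z) l(z) g(z) dν(z) = l(z_1) for every l ∈ L and every z_1. Fix a_1, y_1 ∈ {0,1} and z_1 ∈ Z, and define the second-order influence function χ^{(2)}(x_1, X) = −[ a_1 (y_1 − b(z_1)) · Π(z_1,Z) · (A a(Z) − 1) + (a_1 a(z_1) − 1) · Π(z_1,Z) · A (Y − b(Z)) ] and the score B(α,β,φ)(X) = −((A a(Z) − 1)/(a(Z)(a(Z) − 1))) α(Z) + (A (Y − b(Z))/(b(Z)(1 − b(Z)))) β(Z) + φ(Z). Then for every α ∈ L, β ∈ L, and every measurable φ with ∫ φ f dν = 0 for which the expectations exist, E[ χ^{(2)}(x_1, X) · B(α,β,φ)(X) ] = a_1 (y_1 − b(z_1)) α(z_1) − (a_1 a(z_1) − 1) β(z_1). -/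
open MeasureTheory Filter
open scoped ENNReal NNReal

section Helpers

variable {Ω : Type*} [MeasurableSpace Ω] {P : Measure Ω}

lemma my_integrable_mul_L2 {f g : Ω → ℝ} (hf : MemLp f 2 P) (hg : MemLp g 2 P) :
    Integrable (fun ω => f ω * g ω) P := by
  have h1 := hf.integrable_sq
  have h2 := hg.integrable_sq
  refine ((h1.add h2).const_mul (1/2 : ℝ)).mono'
    (hf.aestronglyMeasurable.mul hg.aestronglyMeasurable) ?_
  refine Eventually.of_forall fun ω => ?_
  have h3 : ‖f ω * g ω‖ = |f ω| * |g ω| := by rw [Real.norm_eq_abs, abs_mul]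
  rw [h3]
  simp only [Pi.add_apply]
  nlinarith [sq_nonneg (|f ω| - |g ω|), sq_abs (f ω), sq_abs (g ω), abs_nonneg (f ω),
    abs_nonneg (g ω)]

lemma my_integrable_of_bdd [IsFiniteMeasure P] {W : Ω → ℝ} (hW : Measurable W)
    (hbd : ∀ ω, |W ω| ≤ 1) : Integrable W P :=
  (integrable_const (1:ℝ)).mono' hW.aestronglyMeasurable
    (Eventually.of_forall fun ω => by simpa using hbd ω)

lemma my_integral_mul_condexp {𝒵 : Type*} [MeasurableSpace 𝒵] [IsProbabilityMeasure P]
    {Z : Ω → 𝒵} (hZ : Measurable Z) {Wf : Ω → ℝ} {w h : 𝒵 → ℝ} (hh : Measurable h)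
    (hint : Integrable (fun ω => h (Z ω) * Wf ω) P) (hWint : Integrable Wf P)
    (hce : P[Wf|MeasurableSpace.comap Z inferInstance] =ᵐ[P] fun ω => w (Z ω)) :
    ∫ ω, h (Z ω) * Wf ω ∂P = ∫ ω, h (Z ω) * w (Z ω) ∂P := by
  set m := MeasurableSpace.comap Z inferInstance with hm_def
  have hm : m ≤ _ := hZ.comap_le
  have hsm : StronglyMeasurable[m] fun ω => h (Z ω) := by
    have hZm : Measurable[m] Z := fun s hs => ⟨s, hs, rfl⟩
    exact (hh.comp hZm).stronglyMeasurable
  have hmul : (fun ω => h (Z ω) * Wf ω) = (fun ω => h (Z ω)) * Wf := rfl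
  have h1 : ∫ ω, h (Z ω) * Wf ω ∂P = ∫ ω, (P[(fun ω => h (Z ω)) * Wf|m]) ω ∂P :=
    (integral_condExp hm (f := (fun ω => h (Z ω)) * Wf)).symm
  rw [h1]
  refine integral_congr_ae ?_
  filter_upwards [condExp_mul_of_stronglyMeasurable_left hsm (hmul ▸ hint) hWint, hce] with ω hω1 hω2
  rw [hω1]
  show h (Z ω) * (P[Wf|m]) ω = _
  rw [hω2]

lemma my_integral_comp {𝒵 : Type*} [MeasurableSpace 𝒵] {ν : Measure 𝒵}
    {Z : Ω → 𝒵} (hZ : Measurable Z) {f : 𝒵 → ℝ} (hfm : Measurable f) (hf0 : ∀ z, 0 ≤ f z)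
    (hlaw : Measure.map Z P = ν.withDensity fun z => ENNReal.ofReal (f z))
    {q : 𝒵 → ℝ} (hq : Measurable q) :
    ∫ ω, q (Z ω) ∂P = ∫ z, q z * f z ∂ν := by
  rw [← integral_map hZ.aemeasurable hq.aestronglyMeasurable, hlaw]
  rw [show (fun z => ENNReal.ofReal (f z)) = fun z => (Real.toNNReal (f z) : ℝ≥0∞)
    from rfl]
  rw [integral_withDensity_eq_integral_smul hfm.real_toNNReal]
  refine integral_congr_ae (Eventually.of_forall fun z => ?_)
  simp [NNReal.smul_def, Real.coe_toNNReal _ (hf0 z), mul_comm]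

lemma my_abs_div_le {x d M ε : ℝ} (hε : 0 < ε) (hd : ε ≤ d) (hx : |x| ≤ M) : |x / d| ≤ M / ε := by
  rw [abs_div, abs_of_pos (hε.trans_le hd)]
  exact div_le_div₀ (le_trans (abs_nonneg x) hx) hx hε hd

lemma my_memLp_mul {𝒵 : Type*} [MeasurableSpace 𝒵] {Z : Ω → 𝒵} (hZ : Measurable Z)
    {e g : 𝒵 → ℝ} (he : Measurable e) {C : ℝ} (hC : ∀ z, |e z| ≤ C) (hgm : Measurable g)
    (hg : MemLp (fun ω => g (Z ω)) 2 P) :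
    MemLp (fun ω => e (Z ω) * g (Z ω)) 2 P := by
  refine hg.of_le_mul (c := C) (((he.comp hZ).mul (hgm.comp hZ)).aestronglyMeasurable) ?_
  refine Eventually.of_forall fun ω => ?_
  simp only [Real.norm_eq_abs, abs_mul]
  exact mul_le_mul_of_nonneg_right (hC _) (abs_nonneg _)

end Helpers

set_option maxHeartbeats 1000000 in
lemma my_pointwise (Av Yv av bv αv βv φv kv c₁ c₂ : ℝ)
    (hA : Av = 0 ∨ Av = 1) (hY : Yv = 0 ∨ Yv = 1)
    (h1 : av ≠ 0) (h2 : av - 1 ≠ 0) (h3 : bv ≠ 0) (h4 : 1 - bv ≠ 0) :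
    (-(c₁ * kv * (Av * av - 1) + c₂ * kv * (Av * (Yv - bv))))
        * (-((Av * av - 1) / (av * (av - 1))) * αv
            + (Av * (Yv - bv) / (bv * (1 - bv))) * βv + φv)
      = kv * ((-(c₂ * bv - c₁ * av) / av - c₁ / (av - 1)) * αv
            + (-((c₂ * bv - c₁ * av) + c₁) / (1 - bv)) * βv
            + (c₂ * bv - c₁ * av) * φv) * Av
        + kv * ((c₂ / av) * αv
            + (-c₂ / bv + ((c₂ * bv - c₁ * av) + c₁) / (bv * (1 - bv))) * βv
            + (-c₂) * φv) * (Av * Yv)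
        + kv * ((c₁ / (av * (av - 1))) * αv + c₁ * φv) := by
  rcases hA with hA | hA <;> rcases hY with hY | hY <;> subst hA hY <;>
    field_simp <;> ring

set_option maxHeartbeats 1000000 in
lemma my_identE (av bv αv βv φv kv c₁ c₂ : ℝ)
    (h1 : av ≠ 0) (h2 : av - 1 ≠ 0) (h3 : bv ≠ 0) (h4 : 1 - bv ≠ 0) :
    kv * ((-(c₂ * bv - c₁ * av) / av - c₁ / (av - 1)) * αv
          + (-((c₂ * bv - c₁ * av) + c₁) / (1 - bv)) * βv
          + (c₂ * bv - c₁ * av) * φv) * (1 / av)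
      + kv * ((c₂ / av) * αv
          + (-c₂ / bv + ((c₂ * bv - c₁ * av) + c₁) / (bv * (1 - bv))) * βv
          + (-c₂) * φv) * (bv / av)
      + kv * ((c₁ / (av * (av - 1))) * αv + c₁ * φv)
      = kv * ((c₁ * αv - c₂ * βv) / av) := by
  field_simp
  ring


set_option maxHeartbeats 1000000 in
/-- **Lemma (second-order influence function representation in the missing data model).**
Let `K` be a symmetric kernel representing the orthogonal projection onto a closed
subspace `L` of `L₂(g·dν)` (`g = f/a`), i.e. `K(z₁,·) ∈ L` and
`∫ K(z₁,z) l(z) g(z) dν(z) = l(z₁)` for all `l ∈ L`. With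
`χ⁽²⁾(x₁,X) = −[a₁(y₁−b(z₁)) K(z₁,Z)(A a(Z)−1) + (a₁ a(z₁)−1) K(z₁,Z) A(Y−b(Z))]` and the
score `B(α,β,φ)(X)`, one has for `α, β ∈ L` and `φ` with `∫ φ f dν = 0`:
`E[χ⁽²⁾(x₁,X) B(α,β,φ)(X)] = a₁(y₁−b(z₁)) α(z₁) − (a₁ a(z₁)−1) β(z₁)`. -/
theorem second_order_influence_function_representation
    {Ω 𝒵 : Type*} [MeasurableSpace Ω] [MeasurableSpace 𝒵]
    (P : Measure Ω) [IsProbabilityMeasure P]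
    (ν : Measure 𝒵) [SigmaFinite ν]
    (Z : Ω → 𝒵) (A Y : Ω → ℝ)
    (hZ : Measurable Z) (hAm : Measurable A) (hYm : Measurable Y)
    (hA01 : ∀ ω, A ω = 0 ∨ A ω = 1) (hY01 : ∀ ω, Y ω = 0 ∨ Y ω = 1)
    (a b f : 𝒵 → ℝ) (ham : Measurable a) (hbm : Measurable b) (hfm : Measurable f)
    (hf0 : ∀ z, 0 ≤ f z)
    (ε : ℝ) (hε : 0 < ε)
    (ha : ∀ z, ε ≤ 1 / a z ∧ 1 / a z ≤ 1 - ε)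
    (hb : ∀ z, ε ≤ b z ∧ b z ≤ 1 - ε)
    (hlaw : Measure.map Z P = ν.withDensity fun z => ENNReal.ofReal (f z))
    (hcondA : P[A|MeasurableSpace.comap Z inferInstance]
        =ᵐ[P] fun ω => 1 / a (Z ω))
    (hcondY : P[Y|MeasurableSpace.comap Z inferInstance]
        =ᵐ[P] fun ω => b (Z ω))
    (hcondAY : P[fun ω => A ω * Y ω|MeasurableSpace.comap Z inferInstance]
        =ᵐ[P] fun ω => b (Z ω) / a (Z ω))
    (L : Submodule ℝ (𝒵 → ℝ))
    (K : 𝒵 → 𝒵 → ℝ) (hKm : Measurable (Function.uncurry K))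
    (hKsym : ∀ z₁ z₂, K z₁ z₂ = K z₂ z₁)
    (hKL : ∀ z₁, (fun z => K z₁ z) ∈ L)
    (hKrep : ∀ l ∈ L, ∀ z₁, ∫ z, K z₁ z * l z * (f z / a z) ∂ν = l z₁)
    (a₁ y₁ : ℝ) (ha₁ : a₁ = 0 ∨ a₁ = 1) (hy₁ : y₁ = 0 ∨ y₁ = 1) (z₁ : 𝒵)
    (α β φ : 𝒵 → ℝ) (hαm : Measurable α) (hβm : Measurable β) (hφm : Measurable φ)
    (hαL : α ∈ L) (hβL : β ∈ L)
    (hφ0 : ∫ z, φ z * f z ∂ν = 0)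
    (hαi : MemLp (fun ω => α (Z ω)) 2 P)
    (hβi : MemLp (fun ω => β (Z ω)) 2 P)
    (hφi : MemLp (fun ω => φ (Z ω)) 2 P)
    (hKi : MemLp (fun ω => K z₁ (Z ω)) 2 P) :
    ∫ ω,
        (-(a₁ * (y₁ - b z₁) * (K z₁ (Z ω)) * (A ω * a (Z ω) - 1)
            + (a₁ * a z₁ - 1) * (K z₁ (Z ω)) * (A ω * (Y ω - b (Z ω)))))
          * (-((A ω * a (Z ω) - 1) / (a (Z ω) * (a (Z ω) - 1))) * α (Z ω)
              + (A ω * (Y ω - b (Z ω)) / (b (Z ω) * (1 - b (Z ω)))) * β (Z ω)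
              + φ (Z ω)) ∂P
      = a₁ * (y₁ - b z₁) * α z₁ - (a₁ * a z₁ - 1) * β z₁ := by
  -- basic numeric facts
  have hε1 : ε ≤ 1 - ε := le_trans (ha z₁).1 (ha z₁).2
  have hε2 : ε ≤ 1 := by linarith
  have hA1 : ∀ ω, |A ω| ≤ 1 := fun ω => by rcases hA01 ω with h | h <;> simp [h]
  have hY1 : ∀ ω, |Y ω| ≤ 1 := fun ω => by rcases hY01 ω with h | h <;> simp [h]
  have haf : ∀ z, 1 < a z ∧ a z ≤ 1 / ε ∧ ε ≤ a z - 1 := by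
    intro z
    obtain ⟨h1, h2⟩ := ha z
    have hpos : 0 < 1 / a z := lt_of_lt_of_le hε h1
    have hapos : 0 < a z := by
      rcases lt_trichotomy (a z) 0 with h | h | h
      · exfalso
        have : 1 / a z < 0 := div_neg_of_pos_of_neg one_pos h
        linarith
      · exfalso; rw [h] at hpos; simp at hpos
      · exact h
    have ha1 : 1 < a z := by
      have hlt : 1 / a z < 1 := lt_of_le_of_lt h2 (by linarith)
      exact (div_lt_one hapos).mp hlt
    have hub : a z ≤ 1 / ε := by
      rw [le_div_iff₀ hε]
      have h3 : ε * a z ≤ (1 / a z) * a z := by nlinarith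
      rw [one_div_mul_cancel (ne_of_gt hapos)] at h3
      linarith [mul_comm ε (a z)]
    have hgap : ε ≤ a z - 1 := by
      have h3 : 1 ≤ (1 - ε) * a z := by
        rw [div_le_iff₀ hapos] at h2
        linarith
      nlinarith
    exact ⟨ha1, hub, hgap⟩
  have hbf : ∀ z, ε ≤ b z ∧ ε ≤ 1 - b z ∧ ε * ε ≤ b z * (1 - b z) := by
    intro z
    obtain ⟨h1, h2⟩ := hb z
    exact ⟨h1, by linarith, by nlinarith⟩
  have habs_a : ∀ z, |a z| ≤ 1 / ε := fun z =>
    by rw [abs_of_pos (by linarith [(haf z).1])]; exact (haf z).2.1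
  have habs_b : ∀ z, |b z| ≤ 1 := fun z =>
    by rw [abs_of_pos (by linarith [(hbf z).1])]; linarith [(hbf z).2.1]
  have hεa : ∀ z, ε ≤ a z := fun z => le_trans hε2 (le_of_lt (haf z).1)
  have hεaa : ∀ z, ε ≤ a z * (a z - 1) := fun z => by nlinarith [(haf z).1, (haf z).2.2]
  -- constants
  set c₁ := a₁ * (y₁ - b z₁) with hc₁
  set c₂ := a₁ * a z₁ - 1 with hc₂
  set D := |c₁| + |c₂| + 1 with hD
  have hc₁D : |c₁| ≤ D := by rw [hD]; linarith [abs_nonneg c₂]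
  have hc₂D : |c₂| ≤ D := by rw [hD]; linarith [abs_nonneg c₁]
  have hD0 : 0 < D := by rw [hD]; positivity
  -- coefficient functions
  set X : 𝒵 → ℝ := fun z => c₂ * b z - c₁ * a z with hX
  set e₁ : 𝒵 → ℝ := fun z => -X z / a z - c₁ / (a z - 1) with he₁
  set e₂ : 𝒵 → ℝ := fun z => -(X z + c₁) / (1 - b z) with he₂
  set v₁ : 𝒵 → ℝ := fun z => c₂ / a z with hv₁
  set v₂ : 𝒵 → ℝ := fun z => -c₂ / b z + (X z + c₁) / (b z * (1 - b z)) with hv₂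
  set w₁ : 𝒵 → ℝ := fun z => c₁ / (a z * (a z - 1)) with hw₁
  set U : 𝒵 → ℝ := fun z => K z₁ z * (e₁ z * α z + e₂ z * β z + X z * φ z) with hU
  set V : 𝒵 → ℝ := fun z => K z₁ z * (v₁ z * α z + v₂ z * β z + (-c₂) * φ z) with hV
  set W : 𝒵 → ℝ := fun z => K z₁ z * (w₁ z * α z + c₁ * φ z) with hW
  -- measurability
  have hkm : Measurable fun z => K z₁ z := hKm.comp (measurable_const.prodMk measurable_id)
  have hXm : Measurable X := by rw [hX]; fun_prop
  have he₁m : Measurable e₁ := by rw [he₁]; fun_prop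
  have he₂m : Measurable e₂ := by rw [he₂]; fun_prop
  have hv₁m : Measurable v₁ := by rw [hv₁]; fun_prop
  have hv₂m : Measurable v₂ := by rw [hv₂]; fun_prop
  have hw₁m : Measurable w₁ := by rw [hw₁]; fun_prop
  have hUm : Measurable U := by rw [hU]; fun_prop
  have hVm : Measurable V := by rw [hV]; fun_prop
  have hWm : Measurable W := by rw [hW]; fun_prop
  -- bounds on coefficients
  have hXb : ∀ z, |X z| ≤ D + D / ε := by
    intro z
    simp only [hX]
    calc |c₂ * b z - c₁ * a z| ≤ |c₂ * b z| + |c₁ * a z| := abs_sub _ _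
      _ = |c₂| * |b z| + |c₁| * |a z| := by rw [abs_mul, abs_mul]
      _ ≤ D * 1 + D * (1 / ε) := by
          gcongr <;> [skip; skip] <;> first
            | exact hc₂D | exact habs_b z | exact hc₁D | exact habs_a z
      _ = D + D / ε := by ring
  have hBe₁ : ∀ z, |e₁ z| ≤ (D + D / ε) / ε + D / ε := by
    intro z
    simp only [he₁]
    refine le_trans (abs_sub _ _) (add_le_add ?_ ?_)
    · have : |(-X z)| ≤ D + D / ε := by rw [abs_neg]; exact hXb z
      exact my_abs_div_le hε (hεa z) this
    · exact my_abs_div_le hε (haf z).2.2 hc₁D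
  have hBe₂ : ∀ z, |e₂ z| ≤ (D + D / ε + D) / ε := by
    intro z
    simp only [he₂]
    refine my_abs_div_le hε (hbf z).2.1 ?_
    rw [abs_neg]
    exact le_trans (abs_add_le _ _) (add_le_add (hXb z) hc₁D)
  have hBv₁ : ∀ z, |v₁ z| ≤ D / ε := by
    intro z
    simp only [hv₁]
    exact my_abs_div_le hε (hεa z) hc₂D
  have hBv₂ : ∀ z, |v₂ z| ≤ D / ε + (D + D / ε + D) / (ε * ε) := by
    intro z
    simp only [hv₂]
    refine le_trans (abs_add_le _ _) (add_le_add ?_ ?_)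
    · have : |(-c₂)| ≤ D := by rw [abs_neg]; exact hc₂D
      exact my_abs_div_le hε (hbf z).1 this
    · refine my_abs_div_le (by positivity) (hbf z).2.2 ?_
      exact le_trans (abs_add_le _ _) (add_le_add (hXb z) hc₁D)
  have hBw₁ : ∀ z, |w₁ z| ≤ D / ε := by
    intro z
    simp only [hw₁]
    exact my_abs_div_le hε (hεaa z) hc₁D
  have hBc₁ : ∀ _z : 𝒵, |c₁| ≤ D := fun _ => hc₁D
  have hBnc₂ : ∀ _z : 𝒵, |(-c₂)| ≤ D := fun _ => by rw [abs_neg]; exact hc₂D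
  -- MemLp and integrability of the pieces
  have hU'2 : MemLp (fun ω => e₁ (Z ω) * α (Z ω) + e₂ (Z ω) * β (Z ω) + X (Z ω) * φ (Z ω)) 2 P :=
    ((my_memLp_mul hZ he₁m hBe₁ hαm hαi).add (my_memLp_mul hZ he₂m hBe₂ hβm hβi)).add
      (my_memLp_mul hZ hXm hXb hφm hφi)
  have hV'2 : MemLp (fun ω => v₁ (Z ω) * α (Z ω) + v₂ (Z ω) * β (Z ω) + (-c₂) * φ (Z ω)) 2 P :=
    ((my_memLp_mul hZ hv₁m hBv₁ hαm hαi).add (my_memLp_mul hZ hv₂m hBv₂ hβm hβi)).add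
      (my_memLp_mul hZ measurable_const hBnc₂ hφm hφi)
  have hW'2 : MemLp (fun ω => w₁ (Z ω) * α (Z ω) + c₁ * φ (Z ω)) 2 P :=
    (my_memLp_mul hZ hw₁m hBw₁ hαm hαi).add
      (my_memLp_mul hZ measurable_const hBc₁ hφm hφi)
  have hUI : Integrable (fun ω => U (Z ω)) P := by
    simp only [hU]; exact my_integrable_mul_L2 hKi hU'2
  have hVI : Integrable (fun ω => V (Z ω)) P := by
    simp only [hV]; exact my_integrable_mul_L2 hKi hV'2
  have hWI : Integrable (fun ω => W (Z ω)) P := by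
    simp only [hW]; exact my_integrable_mul_L2 hKi hW'2
  have hAint : Integrable A P := my_integrable_of_bdd hAm hA1
  have hAYint : Integrable (fun ω => A ω * Y ω) P :=
    my_integrable_of_bdd (hAm.mul hYm) fun ω => by
      rw [abs_mul]
      nlinarith [hA1 ω, hY1 ω, abs_nonneg (A ω), abs_nonneg (Y ω)]
  have hIAU : Integrable (fun ω => U (Z ω) * A ω) P :=
    ((hUI.bdd_mul (c := 1) hAm.aestronglyMeasurable
        (Eventually.of_forall fun ω => by rw [Real.norm_eq_abs]; exact hA1 ω)).congr
      (Eventually.of_forall fun ω => mul_comm _ _))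
  have hIAYV : Integrable (fun ω => V (Z ω) * (A ω * Y ω)) P :=
    ((hVI.bdd_mul (c := 1) (f := fun ω => A ω * Y ω) (hAm.mul hYm).aestronglyMeasurable
        (Eventually.of_forall fun ω => by
          rw [Real.norm_eq_abs, abs_mul]
          nlinarith [hA1 ω, hY1 ω, abs_nonneg (A ω), abs_nonneg (Y ω)])).congr
      (Eventually.of_forall fun ω => mul_comm _ _))
  have h1a : ∀ z, |1 / a z| ≤ 1 := fun z => by
    rw [abs_of_pos (lt_of_lt_of_le hε (ha z).1)]
    linarith [(ha z).2]
  have hba : ∀ z, |b z / a z| ≤ 1 := fun z => by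
    rw [abs_div, abs_of_pos (show (0:ℝ) < b z by linarith [(hbf z).1]),
      abs_of_pos (show (0:ℝ) < a z by linarith [(haf z).1])]
    rw [div_le_one (by linarith [(haf z).1])]
    linarith [(hb z).2, (haf z).1]
  have hIaU : Integrable (fun ω => U (Z ω) * (1 / a (Z ω))) P :=
    ((hUI.bdd_mul (c := 1) (measurable_const.div (ham.comp hZ)).aestronglyMeasurable
        (Eventually.of_forall fun ω => by rw [Real.norm_eq_abs]; exact h1a (Z ω))).congr
      (Eventually.of_forall fun ω => mul_comm _ _))
  have hIbaV : Integrable (fun ω => V (Z ω) * (b (Z ω) / a (Z ω))) P :=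
    ((hVI.bdd_mul (c := 1) ((hbm.comp hZ).div (ham.comp hZ)).aestronglyMeasurable
        (Eventually.of_forall fun ω => by rw [Real.norm_eq_abs]; exact hba (Z ω))).congr
      (Eventually.of_forall fun ω => mul_comm _ _))
  -- pointwise decomposition of the integrand
  have hpt : ∀ ω,
      (-(c₁ * (K z₁ (Z ω)) * (A ω * a (Z ω) - 1)
            + c₂ * (K z₁ (Z ω)) * (A ω * (Y ω - b (Z ω)))))
          * (-((A ω * a (Z ω) - 1) / (a (Z ω) * (a (Z ω) - 1))) * α (Z ω)
              + (A ω * (Y ω - b (Z ω)) / (b (Z ω) * (1 - b (Z ω)))) * β (Z ω)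
              + φ (Z ω))
        = U (Z ω) * A ω + V (Z ω) * (A ω * Y ω) + W (Z ω) := by
    intro ω
    have hA' := haf (Z ω)
    have hB' := hbf (Z ω)
    have h1 : a (Z ω) ≠ 0 := ne_of_gt (by linarith [hA'.1])
    have h2 : a (Z ω) - 1 ≠ 0 := ne_of_gt (by linarith [hA'.1])
    have h3 : b (Z ω) ≠ 0 := ne_of_gt (by linarith [hB'.1])
    have h4 : 1 - b (Z ω) ≠ 0 := ne_of_gt (by linarith [hB'.2.1])
    simp only [hU, hV, hW, he₁, he₂, hv₁, hv₂, hw₁, hX]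
    exact my_pointwise (A ω) (Y ω) (a (Z ω)) (b (Z ω)) (α (Z ω)) (β (Z ω)) (φ (Z ω))
      (K z₁ (Z ω)) c₁ c₂ (hA01 ω) (hY01 ω) h1 h2 h3 h4
  -- pointwise identity after conditioning
  have hE : ∀ z, U z * (1 / a z) + V z * (b z / a z) + W z
      = K z₁ z * ((c₁ * α z - c₂ * β z) / a z) := by
    intro z
    have hA' := haf z
    have hB' := hbf z
    have h1 : a z ≠ 0 := ne_of_gt (by linarith [hA'.1])
    have h2 : a z - 1 ≠ 0 := ne_of_gt (by linarith [hA'.1])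
    have h3 : b z ≠ 0 := ne_of_gt (by linarith [hB'.1])
    have h4 : 1 - b z ≠ 0 := ne_of_gt (by linarith [hB'.2.1])
    simp only [hU, hV, hW, he₁, he₂, hv₁, hv₂, hw₁, hX]
    exact my_identE (a z) (b z) (α z) (β z) (φ z) (K z₁ z) c₁ c₂ h1 h2 h3 h4
  -- the reproducing element
  have hlL : (fun z => c₁ * α z - c₂ * β z) ∈ L := by
    have hmem := L.sub_mem (L.smul_mem c₁ hαL) (L.smul_mem c₂ hβL)
    exact hmem
  have hrep := hKrep _ hlL z₁
  have hqm : Measurable fun z => K z₁ z * ((c₁ * α z - c₂ * β z) / a z) := by fun_prop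
  -- main chain
  calc
    ∫ ω,
        (-(c₁ * (K z₁ (Z ω)) * (A ω * a (Z ω) - 1)
            + c₂ * (K z₁ (Z ω)) * (A ω * (Y ω - b (Z ω)))))
          * (-((A ω * a (Z ω) - 1) / (a (Z ω) * (a (Z ω) - 1))) * α (Z ω)
              + (A ω * (Y ω - b (Z ω)) / (b (Z ω) * (1 - b (Z ω)))) * β (Z ω)
              + φ (Z ω)) ∂P
      = ∫ ω, (U (Z ω) * A ω + V (Z ω) * (A ω * Y ω) + W (Z ω)) ∂P :=
        integral_congr_ae (Eventually.of_forall hpt)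
    _ = (∫ ω, (U (Z ω) * A ω + V (Z ω) * (A ω * Y ω)) ∂P) + ∫ ω, W (Z ω) ∂P :=
        integral_add (hIAU.add hIAYV) hWI
    _ = ((∫ ω, U (Z ω) * A ω ∂P) + ∫ ω, V (Z ω) * (A ω * Y ω) ∂P) + ∫ ω, W (Z ω) ∂P := by
        rw [integral_add hIAU hIAYV]
    _ = ((∫ ω, U (Z ω) * (1 / a (Z ω)) ∂P) + ∫ ω, V (Z ω) * (b (Z ω) / a (Z ω)) ∂P)
          + ∫ ω, W (Z ω) ∂P := by
        rw [my_integral_mul_condexp (w := fun z => 1 / a z) hZ hUm hIAU hAint hcondA,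
          my_integral_mul_condexp (w := fun z => b z / a z) hZ hVm hIAYV hAYint hcondAY]
    _ = ∫ ω, (U (Z ω) * (1 / a (Z ω)) + V (Z ω) * (b (Z ω) / a (Z ω)) + W (Z ω)) ∂P := by
        have h' := integral_add (hIaU.add hIbaV) hWI
        simp only [Pi.add_apply] at h'
        rw [integral_add hIaU hIbaV] at h'
        exact h'.symm
    _ = ∫ ω, K z₁ (Z ω) * ((c₁ * α (Z ω) - c₂ * β (Z ω)) / a (Z ω)) ∂P :=
        integral_congr_ae (Eventually.of_forall fun ω => hE (Z ω))
    _ = ∫ z, (K z₁ z * ((c₁ * α z - c₂ * β z) / a z)) * f z ∂ν :=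
        my_integral_comp hZ hfm hf0 hlaw hqm
    _ = ∫ z, K z₁ z * (c₁ * α z - c₂ * β z) * (f z / a z) ∂ν :=
        integral_congr_ae (Eventually.of_forall fun z => by ring)
    _ = c₁ * α z₁ - c₂ * β z₁ := hrep
end

section
/- In the missing data model, let a̲ and b̲ be measurable functions bounded away from 0 and ∞, let â, b̂ be bounded measurable functions, and let L be a closed subspace of L_2(a̲b̲g·dν). Define ã and b̃ by requiring that (ã − â)/a̲ and (b̃ − b̂)/b̲ are the orthogonal projections in L_2(a̲b̲g·dν) of (a − â)/a̲ and (b − b̂)/b̲ onto L, and let Π: Z×Z → ℝ be a symmetric measurable kernel representing the orthogonal projection onto L in L_2(a̲b̲g·dν), i.e. Π(z_1,·) ∈ L for each z_1 and ∫ Π(z_1,z) l(z) (a̲b̲g)(z) dν(z) = l(z_1) for every l ∈ L. Then for every z_1, z_3 ∈ Z: (i) E[ Π(z_1,Z) (A ã(Z) − 1) b̲(Z) ] = 0; (ii) E[ Π(z_1,Z) A (Y − b̃(Z)) a̲(Z) ] = 0; and (iii) E[ Π(z_1,Z) A (a̲b̲)(Z) Π(Z,z_3) ] = Π(z_1,z_3).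 -/
open MeasureTheory

/-- **Lemma (degeneracy identities in the missing data model).**
With `(ã − â)/a̲` and `(b̃ − b̂)/b̲` the orthogonal projections in `L₂(a̲b̲g·dν)` of
`(a − â)/a̲` and `(b − b̂)/b̲` onto a closed subspace `L`, and `K` a symmetric kernel
representing this projection (`K(z₁,·) ∈ L`, `∫ K(z₁,z) l(z) (a̲b̲g)(z) dν = l(z₁)` for
`l ∈ L`), one has for all `z₁, z₃`:
(i) `E[K(z₁,Z)(A ã(Z) − 1) b̲(Z)] = 0`;
(ii) `E[K(z₁,Z) A (Y − b̃(Z)) a̲(Z)] = 0`;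
(iii) `E[K(z₁,Z) A (a̲b̲)(Z) K(Z,z₃)] = K(z₁,z₃)`. -/
theorem missing_data_degeneracy_identities
    {Ω 𝒵 : Type*} [MeasurableSpace Ω] [MeasurableSpace 𝒵]
    (P : Measure Ω) [IsProbabilityMeasure P]
    (ν : Measure 𝒵) [SigmaFinite ν]
    (Z : Ω → 𝒵) (A Y : Ω → ℝ)
    (hZ : Measurable Z) (hAm : Measurable A) (hYm : Measurable Y)
    (hA01 : ∀ ω, A ω = 0 ∨ A ω = 1) (hY01 : ∀ ω, Y ω = 0 ∨ Y ω = 1)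
    (a b f : 𝒵 → ℝ) (ham : Measurable a) (hbm : Measurable b) (hfm : Measurable f)
    (hf0 : ∀ z, 0 ≤ f z)
    (ε : ℝ) (hε : 0 < ε)
    (ha : ∀ z, ε ≤ 1 / a z ∧ 1 / a z ≤ 1 - ε)
    (hb : ∀ z, ε ≤ b z ∧ b z ≤ 1 - ε)
    (hlaw : Measure.map Z P = ν.withDensity fun z => ENNReal.ofReal (f z))
    (hcondA : P[A|MeasurableSpace.comap Z inferInstance]
        =ᵐ[P] fun ω => 1 / a (Z ω))
    (hcondY : P[Y|MeasurableSpace.comap Z inferInstance]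
        =ᵐ[P] fun ω => b (Z ω))
    (hcondAY : P[fun ω => A ω * Y ω|MeasurableSpace.comap Z inferInstance]
        =ᵐ[P] fun ω => b (Z ω) / a (Z ω))
    (abar bbar ahat bhat atil btil : 𝒵 → ℝ)
    (habarm : Measurable abar) (hbbarm : Measurable bbar)
    (hahatm : Measurable ahat) (hbhatm : Measurable bhat)
    (hatilm : Measurable atil) (hbtilm : Measurable btil)
    (habar : ∃ c C : ℝ, 0 < c ∧ ∀ z, c ≤ abar z ∧ abar z ≤ C)
    (hbbar : ∃ c C : ℝ, 0 < c ∧ ∀ z, c ≤ bbar z ∧ bbar z ≤ C)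
    (M : ℝ) (hahatb : ∀ z, |ahat z| ≤ M) (hbhatb : ∀ z, |bhat z| ≤ M)
    (μbar : Measure 𝒵)
    (hμbar : μbar = ν.withDensity fun z =>
      ENNReal.ofReal (abar z * bbar z * (f z / a z)))
    (L : Submodule ℝ (𝒵 → ℝ)) (hL : ∀ l ∈ L, MemLp l 2 μbar)
    (hamem : MemLp (fun z => (a z - ahat z) / abar z) 2 μbar)
    (hbmem : MemLp (fun z => (b z - bhat z) / bbar z) 2 μbar)
    (hatilL : (fun z => (atil z - ahat z) / abar z) ∈ L)
    (hbtilL : (fun z => (btil z - bhat z) / bbar z) ∈ L)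
    (haorth : ∀ l ∈ L,
      ∫ z, ((a z - atil z) / abar z) * l z * (abar z * bbar z * (f z / a z)) ∂ν = 0)
    (hborth : ∀ l ∈ L,
      ∫ z, ((b z - btil z) / bbar z) * l z * (abar z * bbar z * (f z / a z)) ∂ν = 0)
    (K : 𝒵 → 𝒵 → ℝ) (hKm : Measurable (Function.uncurry K))
    (hKsym : ∀ z₁ z₂, K z₁ z₂ = K z₂ z₁)
    (hKL : ∀ z₁, (fun z => K z₁ z) ∈ L)
    (hKrep : ∀ l ∈ L, ∀ z₁,
      ∫ z, K z₁ z * l z * (abar z * bbar z * (f z / a z)) ∂ν = l z₁) :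
    ∀ z₁ z₃ : 𝒵,
      (∫ ω, K z₁ (Z ω) * (A ω * atil (Z ω) - 1) * bbar (Z ω) ∂P = 0)
      ∧ (∫ ω, K z₁ (Z ω) * (A ω * (Y ω - btil (Z ω))) * abar (Z ω) ∂P = 0)
      ∧ (∫ ω, K z₁ (Z ω) * A ω * (abar (Z ω) * bbar (Z ω)) * K (Z ω) z₃ ∂P
          = K z₁ z₃) := by
  intro z₁ z₃
  obtain ⟨ca, Ca, hca, hbarb⟩ := habar
  obtain ⟨cb, Cb, hcb, hbbarb⟩ := hbbar
  -- basic positivity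
  have hapos : ∀ z, 0 < a z := by
    intro z
    by_contra h
    push_neg at h
    have : 1 / a z ≤ 0 := one_div_nonpos.mpr h
    linarith [(ha z).1]
  have hane : ∀ z, a z ≠ 0 := fun z => (hapos z).ne'
  have habpos : ∀ z, 0 < abar z := fun z => lt_of_lt_of_le hca (hbarb z).1
  have hbbpos : ∀ z, 0 < bbar z := fun z => lt_of_lt_of_le hcb (hbbarb z).1
  have habne : ∀ z, abar z ≠ 0 := fun z => (habpos z).ne'
  have hbbne : ∀ z, bbar z ≠ 0 := fun z => (hbbpos z).ne'
  set w : 𝒵 → ℝ := fun z => abar z * bbar z * (f z / a z) with hw_def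
  have hwm : Measurable w := (habarm.mul hbbarm).mul (hfm.div ham)
  have hw0 : ∀ z, 0 ≤ w z := fun z =>
    mul_nonneg (mul_nonneg (habpos z).le (hbbpos z).le) (div_nonneg (hf0 z) (hapos z).le)
  have hεa : ∀ z, ε * f z ≤ f z / a z := by
    intro z
    rw [div_eq_mul_one_div]
    calc ε * f z = f z * ε := mul_comm _ _
      _ ≤ f z * (1 / a z) := mul_le_mul_of_nonneg_left (ha z).1 (hf0 z)
  have hfa_le : ∀ z, f z / a z ≤ f z := by
    intro z
    rw [div_eq_mul_one_div]
    calc f z * (1 / a z) ≤ f z * 1 := by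
          apply mul_le_mul_of_nonneg_left _ (hf0 z)
          linarith [(ha z).2]
      _ = f z := mul_one _
  have hkey : ∀ z, ca * cb * ε * f z ≤ w z := by
    intro z
    have h1 : ca * cb ≤ abar z * bbar z :=
      mul_le_mul (hbarb z).1 (hbbarb z).1 hcb.le (habpos z).le
    calc ca * cb * ε * f z = (ca * cb) * (ε * f z) := by ring
      _ ≤ (ca * cb) * (f z / a z) :=
          mul_le_mul_of_nonneg_left (hεa z) (by positivity)
      _ ≤ (abar z * bbar z) * (f z / a z) :=
          mul_le_mul_of_nonneg_right h1 (div_nonneg (hf0 z) (hapos z).le)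
  have hwub : ∀ z, w z ≤ Ca * Cb * f z := by
    intro z
    have h1 : abar z * bbar z ≤ Ca * Cb :=
      mul_le_mul (hbarb z).2 (hbbarb z).2 (hbbpos z).le
        (le_trans (habpos z).le (hbarb z).2)
    calc w z = (abar z * bbar z) * (f z / a z) := rfl
      _ ≤ (Ca * Cb) * (f z / a z) :=
          mul_le_mul_of_nonneg_right h1 (div_nonneg (hf0 z) (hapos z).le)
      _ ≤ (Ca * Cb) * f z := by
          apply mul_le_mul_of_nonneg_left (hfa_le z)
          have := habpos z; nlinarith [(hbarb z), (hbbarb z), hbbpos z]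
      _ = Ca * Cb * f z := by ring
  -- total mass of f is 1
  have hfint : ∫⁻ z, ENNReal.ofReal (f z) ∂ν = 1 := by
    haveI := Measure.isProbabilityMeasure_map (μ := P) hZ.aemeasurable
    have h1 : (Measure.map Z P) Set.univ = 1 := measure_univ
    rw [hlaw, withDensity_apply _ MeasurableSet.univ, Measure.restrict_univ] at h1
    exact h1
  haveI hμfin : IsFiniteMeasure μbar := by
    constructor
    rw [hμbar, withDensity_apply _ MeasurableSet.univ, Measure.restrict_univ]
    calc ∫⁻ z, ENNReal.ofReal (w z) ∂ν
        ≤ ∫⁻ z, ENNReal.ofReal (Ca * Cb) * ENNReal.ofReal (f z) ∂ν := by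
          apply lintegral_mono
          intro z
          show ENNReal.ofReal (w z) ≤ ENNReal.ofReal (Ca * Cb) * ENNReal.ofReal (f z)
          rw [← ENNReal.ofReal_mul (by nlinarith [(hbarb z₁), (hbbarb z₁), habpos z₁, hbbpos z₁] : (0:ℝ) ≤ Ca * Cb)]
          exact ENNReal.ofReal_le_ofReal (hwub z)
      _ = ENNReal.ofReal (Ca * Cb) * 1 := by
          rw [lintegral_const_mul _ hfm.ennreal_ofReal, hfint]
      _ < ⊤ := by simp [ENNReal.ofReal_lt_top]
  -- integral over μbar as ν-integral
  have hμint : ∀ g : 𝒵 → ℝ, ∫ z, g z ∂μbar = ∫ z, g z * w z ∂ν := by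
    intro g
    have hD : μbar = ν.withDensity (fun z => (Real.toNNReal (w z) : ENNReal)) := by
      rw [hμbar]; rfl
    rw [hD, integral_withDensity_eq_integral_smul hwm.real_toNNReal]
    apply integral_congr_ae
    filter_upwards with z
    simp [NNReal.smul_def, Real.coe_toNNReal _ (hw0 z), mul_comm]
  have hμint_iff : ∀ g : 𝒵 → ℝ,
      Integrable g μbar ↔ Integrable (fun z => g z * w z) ν := by
    intro g
    rw [hμbar, integrable_withDensity_iff hwm.ennreal_ofReal
      (Filter.Eventually.of_forall fun z => ENNReal.ofReal_lt_top)]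
    have he : (fun x => g x * (ENNReal.ofReal (w x)).toReal) = fun x => g x * w x :=
      funext fun z => by rw [ENNReal.toReal_ofReal (hw0 z)]
    rw [he]
  -- transfer integrability from μbar to f dν
  have htrans : ∀ g : 𝒵 → ℝ, Measurable g → Integrable g μbar →
      Integrable (fun z => g z * f z) ν := by
    intro g hgm hg
    have hk : (0:ℝ) < ca * cb * ε := by positivity
    have h1 : Integrable (fun z => (1 / (ca * cb * ε)) * (g z * w z)) ν :=
      ((hμint_iff g).1 hg).const_mul _
    refine h1.mono (hgm.mul hfm).aestronglyMeasurable (Filter.Eventually.of_forall fun z => ?_)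
    have hf_le : f z ≤ (1 / (ca * cb * ε)) * w z := by
      rw [one_div_mul_eq_div, le_div_iff₀ hk]
      nlinarith [hkey z]
    have hrhs : ‖(1 / (ca * cb * ε)) * (g z * w z)‖
        = (1 / (ca * cb * ε)) * (‖g z‖ * w z) := by
      rw [norm_mul, norm_mul, Real.norm_of_nonneg (hw0 z),
        Real.norm_of_nonneg (by positivity : (0:ℝ) ≤ 1 / (ca * cb * ε))]
    rw [hrhs]
    calc ‖g z * f z‖ = ‖g z‖ * f z := by
          rw [norm_mul, Real.norm_of_nonneg (hf0 z)]
      _ ≤ ‖g z‖ * ((1 / (ca * cb * ε)) * w z) :=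
          mul_le_mul_of_nonneg_left hf_le (norm_nonneg _)
      _ = (1 / (ca * cb * ε)) * (‖g z‖ * w z) := by ring
  -- pushforward
  have hpush : ∀ g : 𝒵 → ℝ, Measurable g →
      ∫ ω, g (Z ω) ∂P = ∫ z, g z * f z ∂ν := by
    intro g hg
    rw [← integral_map hZ.aemeasurable hg.aestronglyMeasurable, hlaw]
    have hD : (fun z => ENNReal.ofReal (f z))
        = fun z => (Real.toNNReal (f z) : ENNReal) := rfl
    rw [hD, integral_withDensity_eq_integral_smul hfm.real_toNNReal]
    apply integral_congr_ae
    filter_upwards with z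
    simp [NNReal.smul_def, Real.coe_toNNReal _ (hf0 z), mul_comm]
  have hcompZ : ∀ g : 𝒵 → ℝ, Measurable g → Integrable (fun z => g z * f z) ν →
      Integrable (fun ω => g (Z ω)) P := by
    intro g hg hint
    have h1 : Integrable g (Measure.map Z P) := by
      rw [hlaw, integrable_withDensity_iff hfm.ennreal_ofReal
        (Filter.Eventually.of_forall fun z => ENNReal.ofReal_lt_top)]
      refine hint.congr (Filter.Eventually.of_forall fun z => ?_)
      simp [ENNReal.toReal_ofReal (hf0 z)]
    exact (integrable_map_measure hg.aestronglyMeasurable hZ.aemeasurable).1 h1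
  -- conditioning reduction
  have hm : MeasurableSpace.comap Z inferInstance ≤ ‹MeasurableSpace Ω› :=
    measurable_iff_comap_le.1 hZ
  haveI : SigmaFinite (P.trim hm) := inferInstance
  have reduce : ∀ (X : Ω → ℝ) (c : 𝒵 → ℝ), Measurable X → (∀ ω, ‖X ω‖ ≤ 1) →
      Measurable c → (P[X|MeasurableSpace.comap Z inferInstance] =ᵐ[P] fun ω => c (Z ω)) →
      ∀ g : 𝒵 → ℝ, Measurable g → Integrable (fun ω => g (Z ω)) P →
      ∫ ω, g (Z ω) * X ω ∂P = ∫ z, g z * c z * f z ∂ν := by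
    intro X c hXm hXb hcm hc g hg hgint
    have hmZ : Measurable[MeasurableSpace.comap Z inferInstance] Z := fun s hs => ⟨s, hs, rfl⟩
    have hgZ : StronglyMeasurable[MeasurableSpace.comap Z inferInstance] fun ω => g (Z ω) :=
      (hg.comp hmZ).stronglyMeasurable
    have hXaesm : AEStronglyMeasurable X P := hXm.aestronglyMeasurable
    have hprod : Integrable ((fun ω => g (Z ω)) * X) P := by
      have h := hgint.bdd_mul hXaesm (Filter.Eventually.of_forall hXb)
      exact h.congr (Filter.Eventually.of_forall fun ω => mul_comm _ _)
    have hXint : Integrable X P := by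
      have h := (integrable_const (1:ℝ)).bdd_mul hXaesm (Filter.Eventually.of_forall hXb)
      exact h.congr (Filter.Eventually.of_forall fun ω => by simp)
    have hic := integral_condExp (μ := P) (f := (fun ω => g (Z ω)) * X) hm
    have step1 : ∫ ω, g (Z ω) * X ω ∂P = ∫ ω, g (Z ω) * c (Z ω) ∂P := by
      calc ∫ ω, g (Z ω) * X ω ∂P
          = ∫ ω, (P[(fun ω => g (Z ω)) * X|MeasurableSpace.comap Z inferInstance]) ω ∂P := hic.symm
        _ = ∫ ω, g (Z ω) * c (Z ω) ∂P := by
            refine integral_congr_ae ?_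
            filter_upwards [condExp_mul_of_stronglyMeasurable_left hgZ hprod hXint, hc] with ω h1 h2
            rw [h1]
            simp only [Pi.mul_apply]
            rw [h2]
    rw [step1]
    have h2 := hpush (fun z => g z * c z) (hg.mul hcm)
    simpa using h2
  -- bounds on A, Y
  have hAbd : ∀ ω, ‖A ω‖ ≤ 1 := by
    intro ω; rcases hA01 ω with h | h <;> simp [h]
  have hAYbd : ∀ ω, ‖A ω * Y ω‖ ≤ 1 := by
    intro ω; rcases hA01 ω with h | h <;> rcases hY01 ω with h' | h' <;> simp [h, h']
  have hainvm : Measurable fun z => 1 / a z := measurable_const.div ham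
  have hbam : Measurable fun z => b z / a z := hbm.div ham
  -- K sections
  have hKsec : ∀ z₀, Measurable fun z => K z₀ z := fun z₀ => hKm.of_uncurry_left
  have hKsec' : Measurable fun z => K z z₃ := hKm.of_uncurry_right
  -- L² facts
  have hK2 : ∀ z₀, MemLp (fun z => K z₀ z) 2 μbar := fun z₀ => hL _ (hKL z₀)
  set latil : 𝒵 → ℝ := fun z => (atil z - ahat z) / abar z with hlatil_def
  set lbtil : 𝒵 → ℝ := fun z => (btil z - bhat z) / bbar z with hlbtil_def
  have hla2 : MemLp latil 2 μbar := hL _ hatilL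
  have hlb2 : MemLp lbtil 2 μbar := hL _ hbtilL
  have hL2mul : ∀ u v : 𝒵 → ℝ, MemLp u 2 μbar → MemLp v 2 μbar →
      Integrable (fun z => u z * v z) μbar := by
    intro u v hu hv
    have h1 : MemLp (u • v) 1 μbar :=
      hv.smul hu
    have h2 := memLp_one_iff_integrable.1 h1
    exact h2.congr (Filter.Eventually.of_forall fun z => by simp [smul_eq_mul])
  have hM0 : 0 ≤ M := le_trans (abs_nonneg _) (hahatb z₁)
  have hKint : ∀ z₀, Integrable (fun z => K z₀ z) μbar :=
    fun z₀ => (hK2 z₀).integrable (by norm_num)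
  -- bounded multiplication helper on μbar
  have hbddmul : ∀ (u c : 𝒵 → ℝ) (Cu : ℝ), Integrable u μbar → Measurable c →
      (∀ z, ‖c z‖ ≤ Cu) → Integrable (fun z => c z * u z) μbar := by
    intro u c Cu hu hcm hcb
    exact hu.bdd_mul hcm.aestronglyMeasurable (Filter.Eventually.of_forall hcb)
  have hatil_eq : ∀ z, atil z = ahat z + abar z * latil z := by
    intro z
    have h := habne z
    simp only [hlatil_def]
    field_simp
    ring
  have hbtil_eq : ∀ z, btil z = bhat z + bbar z * lbtil z := by
    intro z
    have h := hbbne z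
    simp only [hlbtil_def]
    field_simp
    ring
  -- the five g functions
  set g1 : 𝒵 → ℝ := fun z => K z₁ z * atil z * bbar z with hg1_def
  set g2 : 𝒵 → ℝ := fun z => K z₁ z * bbar z with hg2_def
  set g3 : 𝒵 → ℝ := fun z => K z₁ z * abar z with hg3_def
  set g4 : 𝒵 → ℝ := fun z => K z₁ z * btil z * abar z with hg4_def
  set g5 : 𝒵 → ℝ := fun z => K z₁ z * (abar z * bbar z) * K z z₃ with hg5_def
  have hg1m : Measurable g1 := ((hKsec z₁).mul hatilm).mul hbbarm
  have hg2m : Measurable g2 := (hKsec z₁).mul hbbarm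
  have hg3m : Measurable g3 := (hKsec z₁).mul habarm
  have hg4m : Measurable g4 := ((hKsec z₁).mul hbtilm).mul habarm
  have hg5m : Measurable g5 := ((hKsec z₁).mul (habarm.mul hbbarm)).mul hKsec'
  -- integrability over μbar
  have habsbound : ∀ z, ‖ahat z * bbar z‖ ≤ M * Cb := by
    intro z
    rw [norm_mul]
    apply mul_le_mul (by simpa using hahatb z) _ (norm_nonneg _) hM0
    rw [Real.norm_of_nonneg (hbbpos z).le]
    exact (hbbarb z).2
  have hbbsbound : ∀ z, ‖bhat z * abar z‖ ≤ M * Ca := by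
    intro z
    rw [norm_mul]
    apply mul_le_mul (by simpa using hbhatb z) _ (norm_nonneg _) hM0
    rw [Real.norm_of_nonneg (habpos z).le]
    exact (hbarb z).2
  have habbound : ∀ z, ‖abar z * bbar z‖ ≤ Ca * Cb := by
    intro z
    rw [norm_mul, Real.norm_of_nonneg (habpos z).le, Real.norm_of_nonneg (hbbpos z).le]
    exact mul_le_mul (hbarb z).2 (hbbarb z).2 (hbbpos z).le
      (le_trans (habpos z).le (hbarb z).2)
  have hg1i : Integrable g1 μbar := by
    have t1 : Integrable (fun z => (ahat z * bbar z) * K z₁ z) μbar :=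
      hbddmul _ _ _ (hKint z₁) (hahatm.mul hbbarm) habsbound
    have t2 : Integrable (fun z => (abar z * bbar z) * (K z₁ z * latil z)) μbar :=
      hbddmul _ _ _ (hL2mul _ _ (hK2 z₁) hla2) (habarm.mul hbbarm) habbound
    refine (t1.add t2).congr (Filter.Eventually.of_forall fun z => ?_)
    simp only [hg1_def, Pi.add_apply]
    rw [hatil_eq z]; ring
  have hg2i : Integrable g2 μbar := by
    have t1 : Integrable (fun z => bbar z * K z₁ z) μbar :=
      hbddmul _ _ Cb (hKint z₁) hbbarm (fun z => by
        rw [Real.norm_of_nonneg (hbbpos z).le]; exact (hbbarb z).2)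
    refine t1.congr (Filter.Eventually.of_forall fun z => ?_)
    simp only [hg2_def]; ring
  have hg3i : Integrable g3 μbar := by
    have t1 : Integrable (fun z => abar z * K z₁ z) μbar :=
      hbddmul _ _ Ca (hKint z₁) habarm (fun z => by
        rw [Real.norm_of_nonneg (habpos z).le]; exact (hbarb z).2)
    refine t1.congr (Filter.Eventually.of_forall fun z => ?_)
    simp only [hg3_def]; ring
  have hg4i : Integrable g4 μbar := by
    have t1 : Integrable (fun z => (bhat z * abar z) * K z₁ z) μbar :=
      hbddmul _ _ _ (hKint z₁) (hbhatm.mul habarm) hbbsbound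
    have t2 : Integrable (fun z => (abar z * bbar z) * (K z₁ z * lbtil z)) μbar :=
      hbddmul _ _ _ (hL2mul _ _ (hK2 z₁) hlb2) (habarm.mul hbbarm) habbound
    refine (t1.add t2).congr (Filter.Eventually.of_forall fun z => ?_)
    simp only [hg4_def, Pi.add_apply]
    rw [hbtil_eq z]; ring
  have hK3eq : (fun z => K z z₃) = fun z => K z₃ z := funext fun z => hKsym z z₃
  have hg5i : Integrable g5 μbar := by
    have h3 : MemLp (fun z => K z z₃) 2 μbar := by rw [hK3eq]; exact hK2 z₃
    have t2 : Integrable (fun z => (abar z * bbar z) * (K z₁ z * K z z₃)) μbar :=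
      hbddmul _ _ _ (hL2mul _ _ (hK2 z₁) h3) (habarm.mul hbbarm) habbound
    refine t2.congr (Filter.Eventually.of_forall fun z => ?_)
    simp only [hg5_def]; ring
  -- integrability over ν with f weight, and over P
  have hg1f := htrans g1 hg1m hg1i
  have hg2f := htrans g2 hg2m hg2i
  have hg3f := htrans g3 hg3m hg3i
  have hg4f := htrans g4 hg4m hg4i
  have hg5f := htrans g5 hg5m hg5i
  have hg1Z := hcompZ g1 hg1m hg1f
  have hg2Z := hcompZ g2 hg2m hg2f
  have hg3Z := hcompZ g3 hg3m hg3f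
  have hg4Z := hcompZ g4 hg4m hg4f
  have hg5Z := hcompZ g5 hg5m hg5f
  have hmulbd : ∀ (h : Ω → ℝ) (X : Ω → ℝ), Integrable h P → Measurable X →
      (∀ ω, ‖X ω‖ ≤ 1) → Integrable (fun ω => h ω * X ω) P := by
    intro h X hh hXm hXb
    exact (hh.bdd_mul hXm.aestronglyMeasurable (Filter.Eventually.of_forall hXb)).congr
      (Filter.Eventually.of_forall fun ω => mul_comm _ _)
  -- integrability of bounded c * g * f over ν
  have hνbd : ∀ (g c : 𝒵 → ℝ), Integrable (fun z => g z * f z) ν → Measurable c →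
      (∀ z, ‖c z‖ ≤ 1) → Integrable (fun z => g z * c z * f z) ν := by
    intro g c hg hcm hcb
    refine (hg.bdd_mul hcm.aestronglyMeasurable (Filter.Eventually.of_forall hcb)).congr
      (Filter.Eventually.of_forall fun z => ?_)
    ring
  have hainv_bd : ∀ z, ‖1 / a z‖ ≤ 1 := by
    intro z
    rw [Real.norm_of_nonneg (le_of_lt (lt_of_lt_of_le hε (ha z).1))]
    linarith [(ha z).2]
  have hba_bd : ∀ z, ‖b z / a z‖ ≤ 1 := by
    intro z
    have h1 : b z / a z = b z * (1 / a z) := by rw [div_eq_mul_one_div]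
    rw [h1, norm_mul]
    have hb1 : ‖b z‖ ≤ 1 := by
      rw [Real.norm_of_nonneg (le_of_lt (lt_of_lt_of_le hε (hb z).1))]
      linarith [(hb z).2]
    calc ‖b z‖ * ‖1 / a z‖ ≤ 1 * 1 :=
        mul_le_mul hb1 (hainv_bd z) (norm_nonneg _) zero_le_one
      _ = 1 := mul_one 1
  refine ⟨?_, ?_, ?_⟩
  · -- (i)
    have e1 : ∫ ω, K z₁ (Z ω) * (A ω * atil (Z ω) - 1) * bbar (Z ω) ∂P
        = ∫ ω, (g1 (Z ω) * A ω - g2 (Z ω)) ∂P := by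
      apply integral_congr_ae
      filter_upwards with ω
      simp only [hg1_def, hg2_def]; ring
    rw [e1, integral_sub (hmulbd _ _ hg1Z hAm hAbd) hg2Z,
      reduce A (fun z => 1 / a z) hAm hAbd hainvm hcondA g1 hg1m hg1Z,
      hpush g2 hg2m,
      ← integral_sub (hνbd g1 _ hg1f hainvm hainv_bd) hg2f]
    have e2 : ∫ z, (g1 z * (1 / a z) * f z - g2 z * f z) ∂ν
        = ∫ z, -(((a z - atil z) / abar z) * K z₁ z * (abar z * bbar z * (f z / a z))) ∂ν := by
      apply integral_congr_ae
      filter_upwards with z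
      simp only [hg1_def, hg2_def]
      have h1 := habne z
      have h2 := hane z
      field_simp
      ring
    rw [e2, integral_neg]
    have h0 := haorth _ (hKL z₁)
    rw [h0, neg_zero]
  · -- (ii)
    have e1 : ∫ ω, K z₁ (Z ω) * (A ω * (Y ω - btil (Z ω))) * abar (Z ω) ∂P
        = ∫ ω, (g3 (Z ω) * (A ω * Y ω) - g4 (Z ω) * A ω) ∂P := by
      apply integral_congr_ae
      filter_upwards with ω
      simp only [hg3_def, hg4_def]; ring
    rw [e1, integral_sub (hmulbd _ (fun ω => A ω * Y ω) hg3Z (hAm.mul hYm) hAYbd)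
        (hmulbd _ _ hg4Z hAm hAbd),
      reduce (fun ω => A ω * Y ω) (fun z => b z / a z) (hAm.mul hYm) hAYbd hbam
        hcondAY g3 hg3m hg3Z,
      reduce A (fun z => 1 / a z) hAm hAbd hainvm hcondA g4 hg4m hg4Z,
      ← integral_sub (hνbd g3 _ hg3f hbam hba_bd) (hνbd g4 _ hg4f hainvm hainv_bd)]
    have e2 : ∫ z, (g3 z * (b z / a z) * f z - g4 z * (1 / a z) * f z) ∂ν
        = ∫ z, ((b z - btil z) / bbar z) * K z₁ z * (abar z * bbar z * (f z / a z)) ∂ν := by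
      apply integral_congr_ae
      filter_upwards with z
      simp only [hg3_def, hg4_def]
      have h1 := hbbne z
      have h2 := hane z
      field_simp
    rw [e2]
    have h0 := hborth _ (hKL z₁)
    simpa using h0
  · -- (iii)
    have e1 : ∫ ω, K z₁ (Z ω) * A ω * (abar (Z ω) * bbar (Z ω)) * K (Z ω) z₃ ∂P
        = ∫ ω, g5 (Z ω) * A ω ∂P := by
      apply integral_congr_ae
      filter_upwards with ω
      simp only [hg5_def]; ring
    rw [e1, reduce A (fun z => 1 / a z) hAm hAbd hainvm hcondA g5 hg5m hg5Z]
    have e2 : ∫ z, g5 z * (1 / a z) * f z ∂ν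
        = ∫ z, K z₁ z * K z₃ z * (abar z * bbar z * (f z / a z)) ∂ν := by
      apply integral_congr_ae
      filter_upwards with z
      simp only [hg5_def]
      rw [hKsym z z₃]
      field_simp
    rw [e2]
    have h0 := hKrep _ (hKL z₃) z₁
    rw [h0, hKsym z₃ z₁]
end
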